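/- $\lim_{e_1 \to +\infty} \sqrt{e_1}\, I_+(e_1,0) = \int_0^1 \frac{dg}{\sqrt{\frac{2}{3}(1-g)g(g+1)}} = \frac{\sqrt{6\pi}\,\Gamma(5/4)}{\Gamma(3/4)}$. -/

import Mathlib

open Real Set Filter

open MeasureTheory intervalIntegral

lemma J_eq : ∫ x in (0:ℝ)..1, x ^ (-(3:ℝ)/4) * (1-x) ^ (-(1:ℝ)/2)
    = Real.Gamma (1/4) * Real.Gamma (1/2) / Real.Gamma (3/4) := by
  have hbeta := Complex.Gamma_mul_Gamma_eq_betaIntegral (s := 1/4) (t := 1/2)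
    (by norm_num) (by norm_num)
  have hJ : Complex.betaIntegral (1/4) (1/2)
      = ((∫ x in (0:ℝ)..1, x ^ (-(3:ℝ)/4) * (1-x) ^ (-(1:ℝ)/2) : ℝ) : ℂ) := by
    rw [Complex.betaIntegral, ← intervalIntegral.integral_ofReal]
    apply intervalIntegral.integral_congr
    intro x hx
    rw [uIcc_of_le (by norm_num)] at hx
    simp only []
    rw [Complex.ofReal_mul, Complex.ofReal_cpow hx.1, Complex.ofReal_cpow (by linarith [hx.2] : (0:ℝ) ≤ 1 - x)]
    push_cast
    norm_num
  rw [hJ] at hbeta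
  have h34 : Real.Gamma (3/4) ≠ 0 := (Real.Gamma_pos_of_pos (by norm_num)).ne'
  have : ((Real.Gamma (1/4) * Real.Gamma (1/2) : ℝ) : ℂ)
      = ((Real.Gamma (3/4) * ∫ x in (0:ℝ)..1, x ^ (-(3:ℝ)/4) * (1-x) ^ (-(1:ℝ)/2) : ℝ) : ℂ) := by
    push_cast
    rw [← Complex.Gamma_ofReal, ← Complex.Gamma_ofReal, ← Complex.Gamma_ofReal] at *
    convert hbeta using 3 <;> norm_num
  have := Complex.ofReal_inj.mp this
  field_simp
  linarith [this]

lemma image_sq : (fun x : ℝ => x^2) '' Ioo 0 1 = Ioo (0:ℝ) 1 := by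
  ext y
  constructor
  · rintro ⟨x, hx, rfl⟩
    simp only [mem_Ioo]
    exact ⟨pow_pos hx.1 2, by nlinarith [hx.1, hx.2]⟩
  · rintro ⟨h0, h1⟩
    exact ⟨Real.sqrt y, ⟨Real.sqrt_pos.mpr h0, by
      rw [show (1:ℝ) = Real.sqrt 1 by simp]; exact Real.sqrt_lt_sqrt h0.le h1⟩,
      Real.sq_sqrt h0.le⟩

lemma subst_eq (h : ℝ → ℝ) :
    ∫ u in Ioo (0:ℝ) 1, h u = ∫ x in Ioo (0:ℝ) 1, |2*x| * h (x^2) := by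
  have := integral_image_eq_integral_abs_deriv_smul (s := Ioo (0:ℝ) 1)
    (f := fun x => x^2) (f' := fun x => 2*x) measurableSet_Ioo
    (fun x _ => by simpa using (hasDerivAt_pow 2 x).hasDerivWithinAt)
    (fun a ha b hb hab => by dsimp at hab; nlinarith [ha.1, hb.1]) h
  rw [image_sq] at this
  simpa [smul_eq_mul] using this

lemma integrand_eq {x : ℝ} (hx : x ∈ Ioo (0:ℝ) 1) :
    1 / Real.sqrt ((2/3) * (1 - x) * x * (x + 1))
      = Real.sqrt (3/2) / 2 * (|2*x| * ((x^2) ^ (-(3:ℝ)/4) * (1-x^2) ^ (-(1:ℝ)/2))) := by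
  obtain ⟨hx0, hx1⟩ := hx
  have h2 : (0:ℝ) < 1 - x^2 := by nlinarith
  have hs : Real.sqrt ((2/3) * (1 - x) * x * (x + 1))
      = Real.sqrt (2/3) * (Real.sqrt x * Real.sqrt (1-x^2)) := by
    rw [← Real.sqrt_mul (by positivity : (0:ℝ) ≤ x), ← Real.sqrt_mul (by norm_num : (0:ℝ) ≤ 2/3)]
    ring_nf
  have e1 : ((x^2:ℝ)) ^ (-(3:ℝ)/4) = (x * Real.sqrt x)⁻¹ := by
    rw [← Real.rpow_natCast x 2, ← Real.rpow_mul hx0.le]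
    rw [show ((2:ℕ):ℝ) * (-(3:ℝ)/4) = -(3/2) by norm_num, Real.rpow_neg hx0.le]
    congr 1
    rw [show ((3:ℝ)/2) = 1 + 1/2 by norm_num, Real.rpow_add hx0, Real.rpow_one,
      ← Real.sqrt_eq_rpow]
  have e2 : ((1-x^2:ℝ)) ^ (-(1:ℝ)/2) = (Real.sqrt (1-x^2))⁻¹ := by
    rw [show (-(1:ℝ)/2) = -(1/2) by norm_num, Real.rpow_neg h2.le, ← Real.sqrt_eq_rpow]
  rw [hs, e1, e2, abs_of_pos (by positivity : (0:ℝ) < 2*x)]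
  have hsx : (0:ℝ) < Real.sqrt x := Real.sqrt_pos.mpr hx0
  have hs2 : (0:ℝ) < Real.sqrt (1-x^2) := Real.sqrt_pos.mpr h2
  have h23 : Real.sqrt (3/2) * Real.sqrt (2/3) = 1 := by
    rw [← Real.sqrt_mul (by norm_num)]; norm_num
  field_simp
  nlinarith [h23, hsx, hs2, hx0, Real.sqrt_pos.mpr (show (0:ℝ) < 2/3 by norm_num),
    Real.sqrt_pos.mpr (show (0:ℝ) < 3/2 by norm_num)]

lemma sqrt4 : Real.sqrt 4 = 2 := by
  rw [show (4:ℝ) = 2^2 by norm_num, Real.sqrt_sq (by norm_num)]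

lemma part2 : (∫ g in (0:ℝ)..1, 1 / Real.sqrt ((2/3) * (1 - g) * g * (g + 1))) =
    Real.sqrt (6 * π) * Real.Gamma (5/4) / Real.Gamma (3/4) := by
  rw [intervalIntegral.integral_of_le (by norm_num : (0:ℝ) ≤ 1),
    MeasureTheory.integral_Ioc_eq_integral_Ioo,
    MeasureTheory.setIntegral_congr_fun measurableSet_Ioo (fun x hx => integrand_eq hx),
    MeasureTheory.integral_const_mul,
    ← subst_eq (fun u => u ^ (-(3:ℝ)/4) * (1-u) ^ (-(1:ℝ)/2)),
    ← MeasureTheory.integral_Ioc_eq_integral_Ioo,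
    ← intervalIntegral.integral_of_le (by norm_num : (0:ℝ) ≤ 1), J_eq,
    Real.Gamma_one_half_eq]
  have h54 : Real.Gamma (5/4) = 1/4 * Real.Gamma (1/4) := by
    rw [show (5:ℝ)/4 = 1/4 + 1 by norm_num, Real.Gamma_add_one (by norm_num)]
  have h6 : Real.sqrt (6*π) = Real.sqrt (3/2) * 2 * Real.sqrt π := by
    rw [show (6:ℝ)*π = (3/2)*(4*π) by ring, Real.sqrt_mul (by norm_num),
      Real.sqrt_mul (by norm_num : (0:ℝ) ≤ 4), sqrt4]
    ring
  rw [h54, h6]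
  have h34 : Real.Gamma (3/4) ≠ 0 := (Real.Gamma_pos_of_pos (by norm_num)).ne'
  field_simp
  ring

lemma bound_le {x : ℝ} (hx : x ∈ Ioo (0:ℝ) 1) :
    1 / Real.sqrt ((2/3) * (1 - x) * x * (x + 1))
      ≤ Real.sqrt (3/2) * (x ^ (-(1:ℝ)/2) + (1-x) ^ (-(1:ℝ)/2)) := by
  obtain ⟨hx0, hx1⟩ := hx
  have h1 : (0:ℝ) < 1 - x := by linarith
  have ea : x ^ (-(1:ℝ)/2) = (Real.sqrt x)⁻¹ := by
    rw [show (-(1:ℝ)/2) = -(1/2) by norm_num, Real.rpow_neg hx0.le, ← Real.sqrt_eq_rpow]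
  have eb : (1-x) ^ (-(1:ℝ)/2) = (Real.sqrt (1-x))⁻¹ := by
    rw [show (-(1:ℝ)/2) = -(1/2) by norm_num, Real.rpow_neg h1.le, ← Real.sqrt_eq_rpow]
  rw [ea, eb]
  have ha : 0 < Real.sqrt x := Real.sqrt_pos.mpr hx0
  have hb : 0 < Real.sqrt (1-x) := Real.sqrt_pos.mpr h1
  have hab : Real.sqrt x + Real.sqrt (1-x) ≥ 1 := by
    nlinarith [Real.sq_sqrt hx0.le, Real.sq_sqrt h1.le, mul_pos ha hb]
  have step1 : Real.sqrt ((2/3)*x*(1-x)) ≤ Real.sqrt ((2/3) * (1 - x) * x * (x + 1)) :=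
    Real.sqrt_le_sqrt (by nlinarith [mul_nonneg (mul_nonneg hx0.le h1.le) hx0.le])
  have pos1 : 0 < Real.sqrt ((2/3)*x*(1-x)) := Real.sqrt_pos.mpr (by nlinarith)
  have e3 : Real.sqrt ((2/3)*x*(1-x)) = Real.sqrt (2/3) * (Real.sqrt x * Real.sqrt (1-x)) := by
    rw [mul_assoc, Real.sqrt_mul (by norm_num : (0:ℝ) ≤ 2/3), Real.sqrt_mul hx0.le]
  have h23 : Real.sqrt (3/2) * Real.sqrt (2/3) = 1 := by
    rw [← Real.sqrt_mul (by norm_num)]; norm_num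
  have hc : 0 < Real.sqrt (2/3) := Real.sqrt_pos.mpr (by norm_num)
  calc 1 / Real.sqrt ((2/3) * (1 - x) * x * (x + 1))
      ≤ 1 / Real.sqrt ((2/3)*x*(1-x)) := one_div_le_one_div_of_le pos1 step1
    _ = Real.sqrt (3/2) * ((Real.sqrt x)⁻¹ * (Real.sqrt (1-x))⁻¹) := by
        rw [e3]; field_simp; linarith [h23, mul_comm (Real.sqrt (3/2)) (Real.sqrt (2/3))]
    _ ≤ Real.sqrt (3/2) * ((Real.sqrt x)⁻¹ + (Real.sqrt (1-x))⁻¹) := by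
        apply mul_le_mul_of_nonneg_left _ (Real.sqrt_nonneg _)
        rw [inv_add_inv ha.ne' hb.ne', ← mul_inv, inv_eq_one_div]
        gcongr

lemma bound_int : IntegrableOn
    (fun x : ℝ => Real.sqrt (3/2) * (x ^ (-(1:ℝ)/2) + (1-x) ^ (-(1:ℝ)/2))) (Ioo (0:ℝ) 1) := by
  have h1 : IntervalIntegrable (fun x : ℝ => x ^ (-(1:ℝ)/2)) volume 0 1 :=
    intervalIntegrable_rpow' (by norm_num)
  have h2 : IntervalIntegrable (fun x : ℝ => (1-x) ^ (-(1:ℝ)/2)) volume 0 1 := by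
    have := (intervalIntegrable_rpow' (r := -(1:ℝ)/2) (a := 0) (b := 1)
      (by norm_num)).comp_sub_left 1
    simpa using this.symm
  have h3 : IntegrableOn (fun x : ℝ => x ^ (-(1:ℝ)/2) + (1-x) ^ (-(1:ℝ)/2)) (Ioo (0:ℝ) 1) :=
    ((intervalIntegrable_iff_integrableOn_Ioc_of_le (by norm_num)).mp (h1.add h2)).mono_set
      Ioo_subset_Ioc_self
  exact h3.const_mul _

lemma meas_fn (a b c : ℝ) : Measurable (fun x : ℝ =>
    a * (1 / Real.sqrt ((2/3) * (1 - x) * x * (b * x + 6 + c)))) := by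
  apply Measurable.const_mul
  exact measurable_const.div (Real.continuous_sqrt.measurable.comp (by fun_prop))

lemma limit_int : IntegrableOn
    (fun x : ℝ => 1 / Real.sqrt ((2/3) * (1 - x) * x * (x + 1))) (Ioo (0:ℝ) 1) := by
  apply Integrable.mono' bound_int
  · exact (measurable_const.div
      (Real.continuous_sqrt.measurable.comp (by fun_prop))).aestronglyMeasurable
  · rw [ae_restrict_iff' measurableSet_Ioo]
    filter_upwards with x hx
    rw [Real.norm_eq_abs, abs_of_nonneg (by positivity)]
    exact bound_le hx

lemma key_ineq {e1 x : ℝ} (he1 : 1 ≤ e1) (hx : x ∈ Ioo (0:ℝ) 1) :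
    Real.sqrt e1 * (1 / Real.sqrt ((2/3) * (1 - x) * x * (e1 * x + 6 + e1)))
      ≤ 1 / Real.sqrt ((2/3) * (1 - x) * x * (x + 1)) := by
  obtain ⟨hx0, hx1⟩ := hx
  have h1 : (0:ℝ) < 1 - x := by linarith
  have he0 : (0:ℝ) < e1 := by linarith
  set A := (2/3) * (1 - x) * x with hA
  have hApos : 0 < A := by positivity
  have hc : 0 < Real.sqrt (A * (x + 1)) := Real.sqrt_pos.mpr (by positivity)
  have he : 0 < Real.sqrt e1 := Real.sqrt_pos.mpr he0
  have h5 : Real.sqrt e1 * Real.sqrt (A * (x + 1)) ≤ Real.sqrt (A * (e1 * x + 6 + e1)) := by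
    rw [← Real.sqrt_mul he0.le]
    exact Real.sqrt_le_sqrt (by nlinarith)
  calc Real.sqrt e1 * (1 / Real.sqrt (A * (e1 * x + 6 + e1)))
      ≤ Real.sqrt e1 * (1 / (Real.sqrt e1 * Real.sqrt (A * (x + 1)))) := by
        apply mul_le_mul_of_nonneg_left _ he.le
        exact one_div_le_one_div_of_le (by positivity) h5
    _ = 1 / Real.sqrt (A * (x + 1)) := by field_simp

lemma key_lim {x : ℝ} (hx : x ∈ Ioo (0:ℝ) 1) :
    Tendsto (fun e1 : ℝ =>
        Real.sqrt e1 * (1 / Real.sqrt ((2/3) * (1 - x) * x * (e1 * x + 6 + e1))))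
      atTop (nhds (1 / Real.sqrt ((2/3) * (1 - x) * x * (x + 1)))) := by
  obtain ⟨hx0, hx1⟩ := hx
  have h1 : (0:ℝ) < 1 - x := by linarith
  set A := (2/3) * (1 - x) * x with hA
  have hApos : 0 < A := by positivity
  have hc : 0 < Real.sqrt (A * (x + 1)) := Real.sqrt_pos.mpr (by positivity)
  have heq : ∀ᶠ e1 : ℝ in atTop,
      Real.sqrt e1 * (1 / Real.sqrt (A * (e1 * x + 6 + e1)))
        = 1 / Real.sqrt (A * (x + 1) + A * (6 / e1)) := by
    filter_upwards [eventually_gt_atTop (0:ℝ)] with e1 he0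
    have h6 : A * (e1 * x + 6 + e1) = e1 * (A * (x + 1) + A * (6 / e1)) := by
      field_simp; ring
    rw [h6, Real.sqrt_mul he0.le]
    have he : 0 < Real.sqrt e1 := Real.sqrt_pos.mpr he0
    rw [one_div, mul_inv, ← mul_assoc, mul_inv_cancel₀ he.ne', one_mul, one_div]
  refine Tendsto.congr' (EventuallyEq.symm (heq : _ =ᶠ[atTop] _)) ?_
  have h0 : Tendsto (fun e1 : ℝ => A * (x + 1) + A * (6 / e1)) atTop (nhds (A * (x + 1))) := by
    have : Tendsto (fun e1 : ℝ => (6:ℝ) / e1) atTop (nhds 0) :=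
      Tendsto.div_atTop tendsto_const_nhds tendsto_id
    simpa using tendsto_const_nhds.add ((this.const_mul A))
  have hsq : Tendsto (fun e1 : ℝ => Real.sqrt (A * (x + 1) + A * (6 / e1))) atTop
      (nhds (Real.sqrt (A * (x + 1)))) :=
    (Real.continuous_sqrt.continuousAt.tendsto).comp h0
  exact Tendsto.div tendsto_const_nhds hsq hc.ne'

/-- `lim_{e1 → ∞} √e1 · I₊(e1, 0) = ∫₀¹ dg/√((2/3)(1-g)g(g+1)) = √(6π) Γ(5/4)/Γ(3/4)`. -/
theorem sqrt_mul_Iplus_zero_tendsto :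
    Filter.Tendsto
      (fun e1 : ℝ =>
        Real.sqrt e1 *
          ∫ g in (0:ℝ)..1,
            1 / Real.sqrt ((2/3) * (1 - g) * g * (e1 * g + 6 + e1)))
      Filter.atTop
      (nhds (∫ g in (0:ℝ)..1, 1 / Real.sqrt ((2/3) * (1 - g) * g * (g + 1)))) ∧
    (∫ g in (0:ℝ)..1, 1 / Real.sqrt ((2/3) * (1 - g) * g * (g + 1))) =
      Real.sqrt (6 * π) * Real.Gamma (5/4) / Real.Gamma (3/4) := by
  constructor
  · have hrw : (fun e1 : ℝ => Real.sqrt e1 *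
        ∫ g in (0:ℝ)..1, 1 / Real.sqrt ((2/3) * (1 - g) * g * (e1 * g + 6 + e1)))
        = fun e1 : ℝ => ∫ x in Ioo (0:ℝ) 1,
            Real.sqrt e1 * (1 / Real.sqrt ((2/3) * (1 - x) * x * (e1 * x + 6 + e1))) := by
      funext e1
      rw [intervalIntegral.integral_of_le (by norm_num : (0:ℝ) ≤ 1),
        MeasureTheory.integral_Ioc_eq_integral_Ioo, ← MeasureTheory.integral_const_mul]
    rw [hrw, intervalIntegral.integral_of_le (by norm_num : (0:ℝ) ≤ 1),
      MeasureTheory.integral_Ioc_eq_integral_Ioo]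
    apply MeasureTheory.tendsto_integral_filter_of_dominated_convergence
      (bound := fun x => 1 / Real.sqrt ((2/3) * (1 - x) * x * (x + 1)))
    · filter_upwards with e1
      exact (meas_fn (Real.sqrt e1) e1 e1).aestronglyMeasurable
    · filter_upwards [eventually_ge_atTop (1:ℝ)] with e1 he1
      rw [ae_restrict_iff' measurableSet_Ioo]
      filter_upwards with x hx
      rw [Real.norm_eq_abs, abs_of_nonneg (by positivity)]
      exact key_ineq he1 hx
    · exact limit_int
    · rw [ae_restrict_iff' measurableSet_Ioo]
      filter_upwards with x hx
      exact key_lim hx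
  · exact part2
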